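/- (Lemma 1) For every nonzero vector g ∈ ℝ^d and every positive integer s, the variance of the s-Partition Encoding Scheme satisfies Var[φ'(g) | g] = E[‖φ'(g) − g‖² | g] ≤ (d/s²)·‖g‖_∞². -/

import Mathlib

open MeasureTheory ProbabilityTheory
open scoped ProbabilityTheory

/-- Lemma 1: variance bound of the s-Partition Encoding Scheme.
For a nonzero vector `g : Fin d → ℝ` (here `‖g‖` is the ℓ∞ norm, since `Fin d → ℝ`
carries the `Pi` sup norm), a positive integer `s`, levels `l i < s` with
`l i / s ≤ |g i| / ‖g‖ ≤ (l i + 1) / s`, and random variables `b i` taking the value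
`l i / s` with probability `1 - s·|g i|/‖g‖ + l i` and the value `(l i + 1)/s` with
probability `s·|g i|/‖g‖ - l i`, the decoded vector `φ'(g) i = sign (g i) · b i · ‖g‖`
satisfies `E[‖φ'(g) - g‖₂²] ≤ (d / s²)·‖g‖∞²`. -/
theorem stmt1 {Ω : Type*} [MeasureSpace Ω] [IsProbabilityMeasure (ℙ : Measure Ω)]
    {d : ℕ} (g : Fin d → ℝ) (hg : g ≠ 0) (s : ℕ) (hs : 0 < s)
    (l : Fin d → ℕ) (hl : ∀ i, l i < s)
    (hlo : ∀ i, (l i : ℝ) / s ≤ |g i| / ‖g‖)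
    (hhi : ∀ i, |g i| / ‖g‖ ≤ ((l i : ℝ) + 1) / s)
    (b : Fin d → Ω → ℝ)
    (hbmeas : ∀ i, Measurable (b i))
    (hbval : ∀ i, ∀ ω, b i ω = (l i : ℝ) / s ∨ b i ω = ((l i : ℝ) + 1) / s)
    (hblow : ∀ i, ℙ {ω | b i ω = (l i : ℝ) / s}
      = ENNReal.ofReal (1 - s * (|g i| / ‖g‖) + l i))
    (hbhigh : ∀ i, ℙ {ω | b i ω = ((l i : ℝ) + 1) / s}
      = ENNReal.ofReal (s * (|g i| / ‖g‖) - l i)) :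
    (∫ ω, ∑ i, (Real.sign (g i) * b i ω * ‖g‖ - g i) ^ 2)
      ≤ (d / (s : ℝ) ^ 2) * ‖g‖ ^ 2 := by
  have hgn : (0:ℝ) < ‖g‖ := norm_pos_iff.mpr hg
  have hsn : (0:ℝ) < s := by exact_mod_cast hs
  set C : ℝ := (‖g‖ / s) ^ 2 with hC
  have hCnn : 0 ≤ C := sq_nonneg _
  -- pointwise bound for each coordinate
  have key : ∀ i ω, (Real.sign (g i) * b i ω * ‖g‖ - g i) ^ 2 ≤ C := by
    intro i ω
    rcases eq_or_ne (g i) 0 with h0 | h0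
    · rw [h0, Real.sign_zero]
      simpa using hCnn
    · have hsign : Real.sign (g i) * |g i| = g i := by
        rcases lt_or_gt_of_ne h0 with h | h
        · simp [Real.sign_of_neg h, abs_of_neg h]
        · simp [Real.sign_of_pos h, abs_of_pos h]
      have hs2 : (Real.sign (g i)) ^ 2 = 1 := by
        rcases lt_or_gt_of_ne h0 with h | h
        · simp [Real.sign_of_neg h]
        · simp [Real.sign_of_pos h]
      have h1 : (l i : ℝ) / s * ‖g‖ ≤ |g i| := by
        have := hlo i
        have h' : (l i : ℝ) / s * ‖g‖ ≤ |g i| / ‖g‖ * ‖g‖ := by nlinarith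
        calc (l i : ℝ) / s * ‖g‖ ≤ |g i| / ‖g‖ * ‖g‖ := h'
          _ = |g i| := by field_simp
      have h2 : |g i| ≤ ((l i : ℝ) + 1) / s * ‖g‖ := by
        have := hhi i
        have h' : |g i| / ‖g‖ * ‖g‖ ≤ ((l i : ℝ) + 1) / s * ‖g‖ := by nlinarith
        calc |g i| = |g i| / ‖g‖ * ‖g‖ := by field_simp
          _ ≤ ((l i : ℝ) + 1) / s * ‖g‖ := h'
      have hsplit : ((l i : ℝ) + 1) / s * ‖g‖ = (l i : ℝ) / s * ‖g‖ + ‖g‖ / s := by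
        field_simp
      have habs : -(‖g‖ / s) ≤ b i ω * ‖g‖ - |g i| ∧ b i ω * ‖g‖ - |g i| ≤ ‖g‖ / s := by
        have hgs : (0:ℝ) ≤ ‖g‖ / s := by positivity
        rcases hbval i ω with hb | hb <;> rw [hb] <;> constructor <;>
          linarith [hsplit, h1, h2]
      have heq : Real.sign (g i) * b i ω * ‖g‖ - g i
          = Real.sign (g i) * (b i ω * ‖g‖ - |g i|) := by
        linear_combination hsign
      rw [heq, mul_pow, hs2, one_mul, hC]
      exact sq_le_sq' habs.1 habs.2
  -- the integrand is bounded by d * C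
  have hbound : ∀ ω, ‖∑ i, (Real.sign (g i) * b i ω * ‖g‖ - g i) ^ 2‖ ≤ d * C := by
    intro ω
    rw [Real.norm_eq_abs, abs_of_nonneg (Finset.sum_nonneg fun i _ => sq_nonneg _)]
    calc ∑ i, (Real.sign (g i) * b i ω * ‖g‖ - g i) ^ 2
        ≤ ∑ _i : Fin d, C := Finset.sum_le_sum fun i _ => key i ω
      _ = d * C := by simp [mul_comm]
  have hint := norm_integral_le_of_norm_le_const (μ := (ℙ : Measure Ω)) (ae_of_all _ hbound)
  have hmu : (ℙ : Measure Ω).real Set.univ = 1 := by simp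
  rw [hmu, mul_one] at hint
  calc (∫ ω, ∑ i, (Real.sign (g i) * b i ω * ‖g‖ - g i) ^ 2)
      ≤ ‖∫ ω, ∑ i, (Real.sign (g i) * b i ω * ‖g‖ - g i) ^ 2‖ := le_abs_self _
    _ ≤ d * C := hint
    _ = (d / (s : ℝ) ^ 2) * ‖g‖ ^ 2 := by rw [hC, div_pow]; ring
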